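/- Suppose assumptions (A.1)–(A.3) hold and let H be a fixed simple undirected connected graph with vertex set [R]. For t ∈ {0,1,…,R} let E_t be the set of ordered pairs (s₁, s₂) of R-tuples in [N]_R whose component sets share exactly t elements. Then for every t ∈ {0,1,…,R}, N^{−(2R−1)} · Σ_{(s₁,s₂) ∈ E_t} Cov( Ψ_H(Y_N, s₁), Ψ_H(Y_N, s₂) ) → 0 as N → ∞, where Ψ_H(Y_N, s) = Π_{{i,j} ∈ E(H)} Y_{s_i,s_j}. (For t = 0 and t = 1 each covariance is zero; for t ≥ 2 the sum of covariances is nonnegative and of order O(N^{2R−t}).) -/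

import Mathlib

open MeasureTheory ProbabilityTheory Filter Finset
open scoped Classical Topology

noncomputable section

/-- Product of `f` over the edges of `H`, each edge `{i,j}` counted once via its
representative with `i < j`. -/
def edgeProd {R : ℕ} (H : SimpleGraph (Fin R)) (f : Fin R → Fin R → ℝ) : ℝ :=
  ∏ q ∈ Finset.univ.filter (fun q : Fin R × Fin R => H.Adj q.1 q.2 ∧ q.1 < q.2), f q.1 q.2

/-- `Ψ_H(Y, s) = ∏_{{i,j}∈E(H)} Y_{s_i,s_j}`. -/
def PsiY {Ω : Type*} {R N : ℕ} (H : SimpleGraph (Fin R)) (Y : ℕ → ℕ → Ω → ℝ)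
    (s : Fin R ↪ Fin N) (ω : Ω) : ℝ :=
  edgeProd H (fun i j => Y (s i) (s j) ω)

/-- Covariance of two real random variables. -/
def cov {Ω : Type*} [MeasurableSpace Ω] (μ : MeasureTheory.Measure Ω)
    (X Z : Ω → ℝ) : ℝ :=
  (∫ ω, X ω * Z ω ∂μ) - (∫ ω, X ω ∂μ) * ∫ ω, Z ω ∂μ

/-! ### Auxiliary material -/

/-- Normalized (sorted) index of an unordered pair of distinct naturals. -/
def eIdx (a b : ℕ) : {q : ℕ × ℕ // q.1 < q.2} :=
  if h : a < b then ⟨(a, b), h⟩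
  else if h' : b < a then ⟨(b, a), h'⟩
  else ⟨(0, 1), Nat.zero_lt_one⟩

lemma eIdx_spec (a b : ℕ) (h : a ≠ b) :
    ((eIdx a b).1.1 = a ∧ (eIdx a b).1.2 = b) ∨ ((eIdx a b).1.1 = b ∧ (eIdx a b).1.2 = a) := by
  unfold eIdx
  rcases lt_or_gt_of_ne h with h1 | h1
  · rw [dif_pos h1]; left; exact ⟨rfl, rfl⟩
  · rw [dif_neg (by omega), dif_pos h1]; right; exact ⟨rfl, rfl⟩

lemma Y_eIdx {Ω : Type*} (Y : ℕ → ℕ → Ω → ℝ) (hs : ∀ i j, Y i j = Y j i)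
    (a b : ℕ) (h : a ≠ b) : Y a b = Y (eIdx a b).1.1 (eIdx a b).1.2 := by
  rcases eIdx_spec a b h with ⟨h1, h2⟩ | ⟨h1, h2⟩
  · rw [h1, h2]
  · rw [h1, h2, hs]

lemma eIdx_inj (a b c d : ℕ) (hab : a ≠ b) (hcd : c ≠ d) (h : eIdx a b = eIdx c d) :
    (a = c ∧ b = d) ∨ (a = d ∧ b = c) := by
  rcases eIdx_spec a b hab with ⟨h1, h2⟩ | ⟨h1, h2⟩ <;>
    rcases eIdx_spec c d hcd with ⟨h3, h4⟩ | ⟨h3, h4⟩ <;>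
    rw [h] at h1 h2 <;> omega

/-- The finset of edges of `H`, as pairs `(i,j)` with `i < j`. -/
def edgeF {R : ℕ} (H : SimpleGraph (Fin R)) : Finset (Fin R × Fin R) :=
  Finset.univ.filter (fun q : Fin R × Fin R => H.Adj q.1 q.2 ∧ q.1 < q.2)

/-- The set of global (sorted) edge indices used by `Ψ_H(Y,s)`. -/
def ES {R N : ℕ} (H : SimpleGraph (Fin R)) (s : Fin R ↪ Fin N) :
    Finset {q : ℕ × ℕ // q.1 < q.2} :=
  (edgeF H).image (fun q => eIdx (s q.1 : ℕ) (s q.2 : ℕ))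

lemma sval_ne {R N : ℕ} {H : SimpleGraph (Fin R)} (s : Fin R ↪ Fin N)
    {q : Fin R × Fin R} (hq : q ∈ edgeF H) : ((s q.1 : ℕ) ≠ (s q.2 : ℕ)) := by
  simp only [edgeF, Finset.mem_filter, Finset.mem_univ, true_and] at hq
  intro hcontra
  exact hq.1.ne (s.injective (Fin.val_injective hcontra))

lemma psi_eq_prod {Ω : Type*} {R N : ℕ} (H : SimpleGraph (Fin R))
    (Y : ℕ → ℕ → Ω → ℝ) (hsymm : ∀ i j, Y i j = Y j i) (s : Fin R ↪ Fin N) (ω : Ω) :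
    PsiY H Y s ω = ∏ p ∈ ES H s, Y p.1.1 p.1.2 ω := by
  have hinj : Set.InjOn (fun q : Fin R × Fin R => eIdx (s q.1 : ℕ) (s q.2 : ℕ)) (edgeF H) := by
    intro q hq q' hq' h
    have h1 := sval_ne (H := H) s hq
    have h2 := sval_ne (H := H) s hq'
    simp only [edgeF, Finset.coe_filter, Set.mem_setOf_eq, Finset.mem_univ, true_and] at hq hq'
    rcases eIdx_inj _ _ _ _ h1 h2 h with ⟨ha, hb⟩ | ⟨ha, hb⟩
    · exact Prod.ext (s.injective (Fin.val_injective ha)) (s.injective (Fin.val_injective hb))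
    · exfalso
      have e1 : q.1 = q'.2 := s.injective (Fin.val_injective ha)
      have e2 : q.2 = q'.1 := s.injective (Fin.val_injective hb)
      have hlt : q'.2 < q'.1 := by rw [← e1, ← e2]; exact hq.2
      exact lt_asymm hq'.2 hlt
  have hbase : PsiY H Y s ω = ∏ q ∈ edgeF H, Y (s q.1 : ℕ) (s q.2 : ℕ) ω := rfl
  rw [hbase, ES, Finset.prod_image hinj]
  refine Finset.prod_congr rfl fun q hq => ?_
  exact congrFun (Y_eIdx Y hsymm _ _ (sval_ne (H := H) s hq)) ω

lemma psi_measurable {Ω : Type*} [MeasurableSpace Ω] {R N : ℕ} (H : SimpleGraph (Fin R))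
    (Y : ℕ → ℕ → Ω → ℝ) (hYmeas : ∀ i j, Measurable (Y i j)) (s : Fin R ↪ Fin N) :
    Measurable (PsiY H Y s) := by
  unfold PsiY edgeProd
  exact Finset.measurable_prod _ fun q _ => hYmeas _ _

lemma psi_mem_Icc {Ω : Type*} {R N : ℕ} (H : SimpleGraph (Fin R))
    (Y : ℕ → ℕ → Ω → ℝ) (hY01 : ∀ i j ω, Y i j ω = 0 ∨ Y i j ω = 1)
    (s : Fin R ↪ Fin N) (ω : Ω) : PsiY H Y s ω ∈ Set.Icc (0:ℝ) 1 := by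
  unfold PsiY edgeProd
  constructor
  · refine Finset.prod_nonneg fun q _ => ?_
    rcases hY01 (s q.1) (s q.2) ω with h | h <;> simp [h]
  · refine Finset.prod_le_one (fun q _ => ?_) (fun q _ => ?_)
    · rcases hY01 (s q.1) (s q.2) ω with h | h <;> simp [h]
    · rcases hY01 (s q.1) (s q.2) ω with h | h <;> simp [h]

lemma cov_abs_le_two {Ω : Type*} [MeasurableSpace Ω] (μ : Measure Ω) [IsProbabilityMeasure μ]
    (X Z : Ω → ℝ) (hX : ∀ ω, X ω ∈ Set.Icc (0:ℝ) 1) (hZ : ∀ ω, Z ω ∈ Set.Icc (0:ℝ) 1) :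
    |cov μ X Z| ≤ 2 := by
  have key : ∀ (f : Ω → ℝ), (∀ ω, f ω ∈ Set.Icc (0:ℝ) 1) → |∫ ω, f ω ∂μ| ≤ 1 := by
    intro f hf
    have := norm_integral_le_of_norm_le_const (μ := μ) (f := f) (C := 1)
      (Eventually.of_forall fun ω => by
        rw [Real.norm_eq_abs, abs_le]
        exact ⟨by linarith [(hf ω).1], (hf ω).2⟩)
    simpa [Real.norm_eq_abs] using this
  have h1 : |∫ ω, X ω * Z ω ∂μ| ≤ 1 := by
    refine key _ fun ω => ⟨mul_nonneg (hX ω).1 (hZ ω).1, ?_⟩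
    exact mul_le_one₀ (hX ω).2 (hZ ω).1 (hZ ω).2
  have h2 : |∫ ω, X ω ∂μ| ≤ 1 := key _ hX
  have h3 : |∫ ω, Z ω ∂μ| ≤ 1 := key _ hZ
  calc |cov μ X Z| ≤ |∫ ω, X ω * Z ω ∂μ| + |(∫ ω, X ω ∂μ) * ∫ ω, Z ω ∂μ| := abs_sub _ _
    _ ≤ 1 + 1 * 1 := by
        rw [abs_mul]
        have h4 : |∫ ω, X ω ∂μ| * |∫ ω, Z ω ∂μ| ≤ 1 * 1 :=
          mul_le_mul h2 h3 (abs_nonneg _) (by norm_num)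
        linarith
    _ = 2 := by norm_num

lemma es_disjoint {R N : ℕ} (H : SimpleGraph (Fin R)) (s₁ s₂ : Fin R ↪ Fin N)
    (h : ((Finset.univ.image s₁) ∩ (Finset.univ.image s₂)).card ≤ 1) :
    Disjoint (ES H s₁) (ES H s₂) := by
  rw [Finset.disjoint_left]
  intro p hp1 hp2
  simp only [ES, Finset.mem_image] at hp1 hp2
  obtain ⟨q, hq, hq2⟩ := hp1
  obtain ⟨q', hq', hq'2⟩ := hp2
  have h1 := sval_ne s₁ hq
  have h2 := sval_ne s₂ hq'
  have heq : eIdx (s₁ q.1 : ℕ) (s₁ q.2 : ℕ) = eIdx (s₂ q'.1 : ℕ) (s₂ q'.2 : ℕ) := by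
    rw [hq2, hq'2]
  have hsub : ({s₁ q.1, s₁ q.2} : Finset (Fin N)) ⊆
      (Finset.univ.image s₁) ∩ (Finset.univ.image s₂) := by
    rcases eIdx_inj _ _ _ _ h1 h2 heq with ⟨ha, hb⟩ | ⟨ha, hb⟩ <;>
    · intro x hx
      rw [Finset.mem_inter]
      simp only [Finset.mem_insert, Finset.mem_singleton] at hx
      constructor
      · rcases hx with rfl | rfl <;> exact Finset.mem_image_of_mem _ (Finset.mem_univ _)
      · rcases hx with rfl | rfl
        · rw [Fin.val_injective ha]; exact Finset.mem_image_of_mem _ (Finset.mem_univ _)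
        · rw [Fin.val_injective hb]; exact Finset.mem_image_of_mem _ (Finset.mem_univ _)
  have hcard2 : ({s₁ q.1, s₁ q.2} : Finset (Fin N)).card = 2 := by
    rw [Finset.card_insert_of_notMem, Finset.card_singleton]
    simp only [Finset.mem_singleton]
    intro hcontra
    exact h1 (congrArg Fin.val hcontra)
  have := Finset.card_le_card hsub
  omega

lemma cov_zero_of_small_overlap {Ω : Type*} [MeasurableSpace Ω] (μ : Measure Ω)
    [IsProbabilityMeasure μ] {R N : ℕ} (H : SimpleGraph (Fin R))
    (Y : ℕ → ℕ → Ω → ℝ) (hYmeas : ∀ i j, Measurable (Y i j))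
    (hYsymm : ∀ i j, Y i j = Y j i)
    (hindep : iIndepFun
      (fun q : {q : ℕ × ℕ // q.1 < q.2} => Y q.1.1 q.1.2) μ)
    (s₁ s₂ : Fin R ↪ Fin N)
    (h : ((Finset.univ.image s₁) ∩ (Finset.univ.image s₂)).card ≤ 1) :
    cov μ (PsiY H Y s₁) (PsiY H Y s₂) = 0 := by
  have hdisj := es_disjoint H s₁ s₂ h
  set f : {q : ℕ × ℕ // q.1 < q.2} → Ω → ℝ := fun q => Y q.1.1 q.1.2 with hf
  have hfm : ∀ q, Measurable (f q) := fun q => hYmeas _ _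
  have hI := hindep.indepFun_finset (ES H s₁) (ES H s₂) hdisj hfm
  have hm1 : Measurable (fun v : ({x // x ∈ ES H s₁} → ℝ) => ∏ i, v i) :=
    Finset.measurable_prod (f := fun (i : {x // x ∈ ES H s₁})
      (v : {x // x ∈ ES H s₁} → ℝ) => v i) Finset.univ (fun i _ => measurable_pi_apply i)
  have hm2 : Measurable (fun v : ({x // x ∈ ES H s₂} → ℝ) => ∏ i, v i) :=
    Finset.measurable_prod (f := fun (i : {x // x ∈ ES H s₂})
      (v : {x // x ∈ ES H s₂} → ℝ) => v i) Finset.univ (fun i _ => measurable_pi_apply i)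
  have hcomp := hI.comp hm1 hm2
  have e1 : PsiY H Y s₁ = (fun v : ({x // x ∈ ES H s₁} → ℝ) => ∏ i, v i) ∘
      (fun a (i : {x // x ∈ ES H s₁}) => f i a) := by
    funext ω
    rw [psi_eq_prod H Y hYsymm s₁ ω]
    simp only [Function.comp_apply]
    exact (Finset.prod_coe_sort _ _).symm
  have e2 : PsiY H Y s₂ = (fun v : ({x // x ∈ ES H s₂} → ℝ) => ∏ i, v i) ∘
      (fun a (i : {x // x ∈ ES H s₂}) => f i a) := by
    funext ω
    rw [psi_eq_prod H Y hYsymm s₂ ω]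
    simp only [Function.comp_apply]
    exact (Finset.prod_coe_sort _ _).symm
  have hIF : IndepFun (PsiY H Y s₁) (PsiY H Y s₂) μ := by rw [e1, e2]; exact hcomp
  have := hIF.integral_mul_eq_mul_integral (psi_measurable H Y hYmeas s₁).aestronglyMeasurable
    (psi_measurable H Y hYmeas s₂).aestronglyMeasurable
  simp only [Pi.mul_apply] at this
  rw [cov, this, sub_self]

lemma image_sum_elim {R N : ℕ} (s₁ s₂ : Fin R ↪ Fin N) :
    Finset.univ.image (Sum.elim (s₁ : Fin R → Fin N) (s₂ : Fin R → Fin N)) =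
      (Finset.univ.image s₁) ∪ (Finset.univ.image s₂) := by
  ext x
  simp [Sum.exists]

lemma card_overlap_le (R N t : ℕ) (hR : 2 ≤ R) (ht : 2 ≤ t) :
    ((Finset.univ : Finset ((Fin R ↪ Fin N) × (Fin R ↪ Fin N))).filter
        (fun s => ((Finset.univ.image s.1) ∩ (Finset.univ.image s.2)).card = t)).card
      ≤ N ^ (2*R-2) * (2*R-2) ^ (2*R) := by
  classical
  set m := 2 * R - 2 with hmdef
  have hm0 : 0 < m := by omega
  have hR0 : 0 < R := by omega
  set S := (Finset.univ : Finset ((Fin R ↪ Fin N) × (Fin R ↪ Fin N))).filter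
      (fun s => ((Finset.univ.image s.1) ∩ (Finset.univ.image s.2)).card = t) with hS
  set F : (Fin R ↪ Fin N) × (Fin R ↪ Fin N) → (Fin R ⊕ Fin R) → Fin N :=
    fun p => Sum.elim (p.1 : Fin R → Fin N) (p.2 : Fin R → Fin N) with hF
  set L : (Fin R ↪ Fin N) × (Fin R ↪ Fin N) → List (Fin N) :=
    fun p => (Finset.univ.image (F p)).sort (· ≤ ·) with hL
  set φ : (Fin R ↪ Fin N) × (Fin R ↪ Fin N) →
      (Fin m → Fin N) × ((Fin R ⊕ Fin R) → Fin m) :=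
    fun p => (fun k => (L p).getD k (p.1 ⟨0, hR0⟩),
              fun i => ⟨(L p).idxOf (F p i) % m, Nat.mod_lt _ hm0⟩) with hφ
  have hrec : ∀ p ∈ S, ∀ i, (φ p).1 ((φ p).2 i) = F p i := by
    intro p hp i
    have hcard : ((Finset.univ.image p.1) ∩ (Finset.univ.image p.2)).card = t := by
      rw [hS, Finset.mem_filter] at hp; exact hp.2
    have himg : (Finset.univ.image (F p)).card ≤ m := by
      rw [hF]
      rw [image_sum_elim p.1 p.2]
      have := Finset.card_union_add_card_inter (Finset.univ.image p.1) (Finset.univ.image p.2)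
      rw [hcard, Finset.card_image_of_injective _ p.1.injective,
        Finset.card_image_of_injective _ p.2.injective, Finset.card_univ,
        Fintype.card_fin] at this
      omega
    have hmemL : F p i ∈ L p := by
      rw [hL]
      simp only [Finset.mem_sort]
      exact Finset.mem_image_of_mem _ (Finset.mem_univ _)
    have hlen : (L p).length = (Finset.univ.image (F p)).card := Finset.length_sort _
    have hidx : (L p).idxOf (F p i) < (L p).length := List.idxOf_lt_length_iff.2 hmemL
    have hidxm : (L p).idxOf (F p i) < m := by omega
    simp only [hφ]
    rw [Nat.mod_eq_of_lt hidxm]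
    rw [List.getD_eq_getElem _ _ (by omega)]
    exact List.getElem_idxOf hidx
  apply le_trans (Finset.card_le_card_of_injOn φ
    (fun p _ => Finset.mem_univ (φ p)) ?_)
  · rw [Finset.card_univ]
    rw [Fintype.card_prod, Fintype.card_fun, Fintype.card_fun]
    simp only [Fintype.card_fin, Fintype.card_sum]
    have : R + R = 2 * R := by omega
    rw [this]
  · intro p hp q hq hpq
    have hFpq : ∀ i, F p i = F q i := by
      intro i
      rw [← hrec p hp i, ← hrec q hq i, hpq]
    have h1 : p.1 = q.1 := by
      apply DFunLike.ext
      intro a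
      exact hFpq (Sum.inl a)
    have h2 : p.2 = q.2 := by
      apply DFunLike.ext
      intro a
      exact hFpq (Sum.inr a)
    exact Prod.ext h1 h2

/-- Lemma A.1: for every overlap size `t`, the normalized sum over `E_t` of the
covariances of `Ψ_H(Y_N, s₁)` and `Ψ_H(Y_N, s₂)` tends to `0`. -/
theorem covariance_sum_vanishes
    {Ω : Type*} [MeasurableSpace Ω] (μ : Measure Ω) [IsProbabilityMeasure μ]
    (K : ℕ) (hK : 2 ≤ K)
    (Pi : Fin K → Fin K → ℝ)
    (hPisymm : ∀ i j, Pi i j = Pi j i)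
    (hPimem : ∀ i j, Pi i j ∈ Set.Icc (0:ℝ) 1)
    (c : ℝ) (hc0 : 0 < c) (hc1 : c ≤ 1)
    (hPidiag : ∃ i, c ≤ Pi i i)
    (α : ℕ → Fin K)
    (lam : Fin K → ℝ)
    (hlam : ∀ k, lam k ∈ Set.Ioo (0:ℝ) 1)
    (hlamsum : ∑ k, lam k = 1)
    (hlamlim : ∀ k, Tendsto
      (fun N : ℕ => (((Finset.range N).filter (fun i => α i = k)).card : ℝ) / N)
      atTop (𝓝 (lam k)))
    (Y : ℕ → ℕ → Ω → ℝ)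
    (hYmeas : ∀ i j, Measurable (Y i j))
    (hYsymm : ∀ i j, Y i j = Y j i)
    (hYdiag : ∀ i, Y i i = 0)
    (hY01 : ∀ i j ω, Y i j ω = 0 ∨ Y i j ω = 1)
    (hYdist : ∀ i j, i < j → μ {ω | Y i j ω = 1} = ENNReal.ofReal (Pi (α i) (α j)))
    (hindep : iIndepFun
      (fun q : {q : ℕ × ℕ // q.1 < q.2} => Y q.1.1 q.1.2) μ)
    (R : ℕ) (hR : 2 ≤ R)
    (H : SimpleGraph (Fin R)) (hconn : H.Connected) :
    ∀ t : ℕ, t ≤ R →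
      Tendsto
        (fun N : ℕ =>
          (∑ s ∈ (Finset.univ : Finset ((Fin R ↪ Fin N) × (Fin R ↪ Fin N))).filter
              (fun s => ((Finset.univ.image s.1) ∩ (Finset.univ.image s.2)).card = t),
            cov μ (PsiY H Y s.1) (PsiY H Y s.2)) / (N:ℝ) ^ (2*R - 1))
        atTop (𝓝 0) := by
  intro t htR
  by_cases ht2 : t ≤ 1
  · -- all covariances vanish
    have hzero : ∀ N : ℕ,
        (∑ s ∈ (Finset.univ : Finset ((Fin R ↪ Fin N) × (Fin R ↪ Fin N))).filter
            (fun s => ((Finset.univ.image s.1) ∩ (Finset.univ.image s.2)).card = t),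
          cov μ (PsiY H Y s.1) (PsiY H Y s.2)) = 0 := by
      intro N
      refine Finset.sum_eq_zero fun p hp => ?_
      rw [Finset.mem_filter] at hp
      exact cov_zero_of_small_overlap μ H Y hYmeas hYsymm hindep p.1 p.2 (hp.2 ▸ ht2)
    have : (fun N : ℕ =>
        (∑ s ∈ (Finset.univ : Finset ((Fin R ↪ Fin N) × (Fin R ↪ Fin N))).filter
            (fun s => ((Finset.univ.image s.1) ∩ (Finset.univ.image s.2)).card = t),
          cov μ (PsiY H Y s.1) (PsiY H Y s.2)) / (N:ℝ) ^ (2*R - 1)) = fun _ => (0:ℝ) := by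
      funext N
      rw [hzero N, zero_div]
    rw [this]
    exact tendsto_const_nhds
  · push_neg at ht2
    have ht2' : 2 ≤ t := ht2
    set D : ℝ := (((2*R-2) ^ (2*R) : ℕ) : ℝ) with hD
    have hD0 : 0 ≤ D := by positivity
    refine squeeze_zero_norm (a := fun N : ℕ =>
      (2 * (((N:ℝ)) ^ (2*R-2) * D)) / (N:ℝ) ^ (2*R-1)) ?_ ?_
    · intro N
      by_cases hN : N = 0
      · subst hN
        simp only [Nat.cast_zero, zero_pow (show 2*R-1 ≠ 0 by omega), div_zero, norm_zero,
          le_refl]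
      · have hNpos : (0:ℝ) < (N:ℝ) ^ (2*R-1) := by
          have : (0:ℝ) < (N:ℝ) := by exact_mod_cast Nat.pos_of_ne_zero hN
          positivity
        rw [Real.norm_eq_abs, abs_div, abs_of_pos hNpos]
        apply div_le_div_of_nonneg_right ?_ hNpos.le
        calc |∑ s ∈ (Finset.univ : Finset ((Fin R ↪ Fin N) × (Fin R ↪ Fin N))).filter
              (fun s => ((Finset.univ.image s.1) ∩ (Finset.univ.image s.2)).card = t),
            cov μ (PsiY H Y s.1) (PsiY H Y s.2)|
            ≤ ∑ s ∈ (Finset.univ : Finset ((Fin R ↪ Fin N) × (Fin R ↪ Fin N))).filter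
              (fun s => ((Finset.univ.image s.1) ∩ (Finset.univ.image s.2)).card = t),
              |cov μ (PsiY H Y s.1) (PsiY H Y s.2)| := Finset.abs_sum_le_sum_abs _ _
          _ ≤ ∑ s ∈ (Finset.univ : Finset ((Fin R ↪ Fin N) × (Fin R ↪ Fin N))).filter
              (fun s => ((Finset.univ.image s.1) ∩ (Finset.univ.image s.2)).card = t),
              (2:ℝ) := by
              refine Finset.sum_le_sum fun p _ => ?_
              exact cov_abs_le_two μ _ _ (psi_mem_Icc H Y hY01 p.1) (psi_mem_Icc H Y hY01 p.2)
          _ = 2 * ((Finset.univ : Finset ((Fin R ↪ Fin N) × (Fin R ↪ Fin N))).filter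
              (fun s => ((Finset.univ.image s.1) ∩ (Finset.univ.image s.2)).card = t)).card := by
              rw [Finset.sum_const, nsmul_eq_mul, mul_comm]
          _ ≤ 2 * ((N:ℝ) ^ (2*R-2) * D) := by
              have hcount := card_overlap_le R N t hR ht2'
              have : (((Finset.univ : Finset ((Fin R ↪ Fin N) × (Fin R ↪ Fin N))).filter
                  (fun s => ((Finset.univ.image s.1) ∩ (Finset.univ.image s.2)).card = t)).card : ℝ)
                  ≤ (N:ℝ) ^ (2*R-2) * D := by
                rw [hD]
                push_cast
                exact_mod_cast Nat.cast_le.mpr hcount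
              linarith
    · have hlim : Tendsto (fun N : ℕ => (2 * D) / (N:ℝ)) atTop (𝓝 0) :=
        tendsto_const_div_atTop_nhds_zero_nat _
      refine hlim.congr' ?_
      filter_upwards [eventually_ge_atTop 1] with N hN
      have hN0 : ((N:ℝ)) ≠ 0 := by
        exact_mod_cast Nat.one_le_iff_ne_zero.mp hN
      have hNa : ((N:ℝ)) ^ (2*R-2) ≠ 0 := pow_ne_zero _ hN0
      have hpow : ((N:ℝ)) ^ (2*R-1) = (N:ℝ) ^ (2*R-2) * N := by
        rw [← pow_succ]
        congr 1
        omega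
      rw [hpow]
      rw [show (2:ℝ) * ((N:ℝ) ^ (2*R-2) * D) = (N:ℝ) ^ (2*R-2) * (2*D) by ring]
      rw [mul_div_mul_left _ _ hNa]

end
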